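/- Let G be a finite simple graph, S a subgraph of G, and L a list assignment for G. If there exists an L-coloring of S that does not extend to an L-coloring of G, then there exists a subgraph H of G with S ⊆ H and H ≠ S such that H is S-critical with respect to L. -/

import Mathlib

/-- An `L`-coloring of the subgraph `H` of `G`: a function assigning colors such that every
vertex of `H` gets a color from its list and adjacent vertices of `H` get distinct colors. -/
def IsLColoring {V α : Type*} (G : SimpleGraph V) (L : V → Finset α) (H : G.Subgraph)
    (φ : V → α) : Prop :=
  (∀ v ∈ H.verts, φ v ∈ L v) ∧ ∀ ⦃u v : V⦄, H.Adj u v → φ u ≠ φ v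

/-- An `L`-coloring `φ` of the subgraph `S` extends to the subgraph `H` (with `S ⊆ H`) if there
is an `L`-coloring of `H` agreeing with `φ` on the vertices of `S`. -/
def ExtendsToLColoring {V α : Type*} (G : SimpleGraph V) (L : V → Finset α) (S H : G.Subgraph)
    (φ : V → α) : Prop :=
  ∃ ψ : V → α, IsLColoring G L H ψ ∧ ∀ v ∈ S.verts, ψ v = φ v

/-- The subgraph `K` of `G` is `S`-critical with respect to `L`: for every proper subgraph `H`
of `K` with `S ⊆ H`, some `L`-coloring of `S` extends to `H` but not to `K`. -/
def IsCriticalSub {V α : Type*} (G : SimpleGraph V) (L : V → Finset α) (S K : G.Subgraph) :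
    Prop :=
  ∀ H : G.Subgraph, S ≤ H → H < K →
    ∃ φ : V → α, IsLColoring G L S φ ∧ ExtendsToLColoring G L S H φ ∧
      ¬ ExtendsToLColoring G L S K φ

/-- if some `L`-coloring of `S` does not extend to `G`, then `G` contains a
subgraph `H ⊇ S` with `H ≠ S` that is `S`-critical with respect to `L`. -/
theorem statement_1 {V α : Type*} [Fintype V] (G : SimpleGraph V) (L : V → Finset α)
    (S : G.Subgraph) (φ : V → α)
    (hφ : IsLColoring G L S φ)
    (hnot : ¬ ExtendsToLColoring G L S ⊤ φ) :
    ∃ H : G.Subgraph, S ≤ H ∧ H ≠ S ∧ IsCriticalSub G L S H := by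
  classical
  haveI : Finite G.Subgraph := by
    have hinj : Function.Injective (fun K : G.Subgraph => (K.verts, K.Adj)) := by
      intro a b h
      rw [Prod.mk.injEq] at h
      exact SimpleGraph.Subgraph.ext h.1 h.2
    exact Finite.of_injective _ hinj
  set T : Set G.Subgraph :=
    {K | S ≤ K ∧ ∃ χ : V → α, IsLColoring G L S χ ∧ ¬ ExtendsToLColoring G L S K χ} with hTdef
  have hne : T.Nonempty := ⟨⊤, le_top, φ, hφ, hnot⟩
  obtain ⟨K, hKT, hmin⟩ := Set.Finite.exists_minimalFor id T (Set.toFinite T) hne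
  obtain ⟨hSK, χ, hχ, hnχ⟩ := hKT
  refine ⟨K, hSK, ?_, ?_⟩
  · rintro rfl
    exact hnχ ⟨χ, hχ, fun v _ => rfl⟩
  · intro H hSH hHK
    have hHT : H ∉ T := by
      intro hH
      exact hHK.ne' (le_antisymm (hmin hH hHK.le) hHK.le)
    have hext : ExtendsToLColoring G L S H χ := by
      by_contra hc
      exact hHT ⟨hSH, χ, hχ, hc⟩
    exact ⟨χ, hχ, hext, hnχ⟩
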